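/- arXiv:1110.1137 — 3 statements merged into one kernel-verified Lean document; each statement's English description precedes it below -/
import Mathlib

section
/- For each n ∈ ℕ there exists ε > 0 such that the initial segment (a_0(q), a_1(q), …, a_n(q)) of the greedy firing sequence is the same for all q ∈ (1−ε, 1). -/
/-- Auxiliary sequence: `greedyAux q n = (a_n(q), S_n(q))` where
`S_n(q) = ∑_{j=0}^n a_j(q) q^j`; the next shooter is `-a_n` iff
`f_n(q) = a_n(q) · S_n(q) ≥ 0`. -/
noncomputable def greedyAux (q : ℝ) : ℕ → ℤ × ℝ
  | 0 => (-1, -1)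
  | n + 1 =>
    let p := greedyAux q n
    let next : ℤ := if 0 ≤ (p.1 : ℝ) * p.2 then -p.1 else p.1
    (next, p.2 + (next : ℝ) * q ^ (n + 1))

/-- The greedy firing sequence `a(q) : ℕ → {-1, 1}`: `a 0 = -1`, and
`a (n+1) = -a n` if `f_n(q) = a_n · (∑_{j=0}^n a_j q^j) ≥ 0`, else `a (n+1) = a n`. -/
noncomputable def greedySeq (q : ℝ) (n : ℕ) : ℤ := (greedyAux q n).1

lemma greedyAux_fst_sq (q : ℝ) (n : ℕ) :
    (greedyAux q n).1 = 1 ∨ (greedyAux q n).1 = -1 := by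
  induction n with
  | zero => right; rfl
  | succ n ih =>
    show (if 0 ≤ ((greedyAux q n).1 : ℝ) * (greedyAux q n).2 then -(greedyAux q n).1
        else (greedyAux q n).1) = 1 ∨
      (if 0 ≤ ((greedyAux q n).1 : ℝ) * (greedyAux q n).2 then -(greedyAux q n).1
        else (greedyAux q n).1) = -1
    split <;> rcases ih with h | h <;> simp [h]

lemma greedyAux_snd (q : ℝ) (n : ℕ) :
    (greedyAux q n).2 = ∑ j ∈ Finset.range (n + 1), ((greedyAux q j).1 : ℝ) * q ^ j := by
  induction n with
  | zero => simp [greedyAux]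
  | succ n ih =>
    rw [Finset.sum_range_succ, ← ih]
    rfl

lemma key (n : ℕ) : ∃ ε > (0 : ℝ), ∃ b : ℕ → ℤ,
    ∀ q ∈ Set.Ioo (1 - ε) (1 : ℝ), ∀ i ≤ n, (greedyAux q i).1 = b i := by
  induction n with
  | zero =>
    exact ⟨1, one_pos, fun _ => -1, fun q _ i hi => by
      interval_cases i; rfl⟩
  | succ n ih =>
    obtain ⟨ε, hε, b, hb⟩ := ih
    -- the polynomial S_n as a polynomial in q
    set P : Polynomial ℝ :=
      ∑ j ∈ Finset.range (n + 1), Polynomial.C ((b j : ℝ)) * Polynomial.X ^ j with hP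
    have hq1 : (1 - ε / 2 : ℝ) ∈ Set.Ioo (1 - ε) (1 : ℝ) := by
      constructor <;> nlinarith
    have hb0 : b 0 = -1 := by
      have := hb (1 - ε / 2) hq1 0 (Nat.zero_le _)
      rw [← this]; rfl
    have hPne : P ≠ 0 := by
      intro h
      have : P.coeff 0 = (b 0 : ℝ) := by
        simp [hP, Polynomial.finset_sum_coeff, Polynomial.coeff_X_pow,
          Finset.sum_ite_eq, Finset.mem_range]
      rw [h, hb0] at this
      norm_num at this
    have hPeval : ∀ q : ℝ, q ∈ Set.Ioo (1 - ε) (1 : ℝ) →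
        P.eval q = (greedyAux q n).2 := by
      intro q hq
      rw [greedyAux_snd]
      simp only [hP, Polynomial.eval_finset_sum, Polynomial.eval_mul, Polynomial.eval_C,
        Polynomial.eval_pow, Polynomial.eval_X]
      exact Finset.sum_congr rfl fun j hj => by
        rw [hb q hq j (Nat.lt_succ_iff.mp (Finset.mem_range.mp hj))]
    -- finitely many roots; pick δ so that (1-δ, 1) avoids all roots < 1
    set S : Finset ℝ := P.roots.toFinset.filter (fun r => r < 1) with hS
    obtain ⟨δ, hδpos, hδε, hnoroot⟩ :
        ∃ δ > (0 : ℝ), δ ≤ ε ∧ ∀ q ∈ Set.Ioo (1 - δ) (1 : ℝ), P.eval q ≠ 0 := by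
      by_cases hSne : S.Nonempty
      · refine ⟨min ε (1 - S.max' hSne), ?_, min_le_left _ _, ?_⟩
        · have : S.max' hSne < 1 := (Finset.mem_filter.mp (S.max'_mem hSne)).2
          exact lt_min hε (by linarith)
        · intro q hq hq0
          have hqS : q ∈ S := by
            refine Finset.mem_filter.mpr ⟨Multiset.mem_toFinset.mpr ?_, hq.2⟩
            exact Polynomial.mem_roots'.mpr ⟨hPne, hq0⟩
          have h1 : q ≤ S.max' hSne := S.le_max' q hqS
          have h2 : 1 - min ε (1 - S.max' hSne) < q := hq.1
          have h3 : min ε (1 - S.max' hSne) ≤ 1 - S.max' hSne := min_le_right _ _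
          linarith
      · refine ⟨ε, hε, le_refl _, fun q hq hq0 => hSne ⟨q, ?_⟩⟩
        exact Finset.mem_filter.mpr ⟨Multiset.mem_toFinset.mpr
          (Polynomial.mem_roots'.mpr ⟨hPne, hq0⟩), hq.2⟩
    have hsub : Set.Ioo (1 - δ) (1 : ℝ) ⊆ Set.Ioo (1 - ε) 1 := by
      apply Set.Ioo_subset_Ioo _ le_rfl; linarith
    -- same sign on (1-δ, 1)
    have hsign : ∀ x ∈ Set.Ioo (1 - δ) (1 : ℝ), ∀ y ∈ Set.Ioo (1 - δ) (1 : ℝ),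
        0 < P.eval x * P.eval y := by
      have main : ∀ x ∈ Set.Ioo (1 - δ) (1 : ℝ), ∀ y ∈ Set.Ioo (1 - δ) (1 : ℝ),
          x ≤ y → 0 < P.eval x * P.eval y := by
        intro x hx y hy hxy
        rcases mul_pos_iff.mp ((mul_self_pos.mpr (hnoroot x hx)).trans_le
          (le_refl _)) with _ | _
        all_goals
        by_contra hle
        push_neg at hle
        have hne : P.eval x * P.eval y ≠ 0 :=
          mul_ne_zero (hnoroot x hx) (hnoroot y hy)
        have hlt : P.eval x * P.eval y < 0 := lt_of_le_of_ne hle hne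
        have hcont : ContinuousOn (fun t => P.eval t) (Set.Icc x y) :=
          P.continuous.continuousOn
        have hIcc : Set.Icc x y ⊆ Set.Ioo (1 - δ) (1 : ℝ) := by
          intro t ht
          exact ⟨lt_of_lt_of_le hx.1 ht.1, lt_of_le_of_lt ht.2 hy.2⟩
        rcases mul_neg_iff.mp hlt with ⟨hpx, hpy⟩ | ⟨hpx, hpy⟩
        · have : (0 : ℝ) ∈ Set.Icc (P.eval y) (P.eval x) := ⟨le_of_lt hpy, le_of_lt hpx⟩
          obtain ⟨z, hz, hz0⟩ := intermediate_value_Icc' hxy hcont this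
          exact hnoroot z (hIcc hz) hz0
        · have : (0 : ℝ) ∈ Set.Icc (P.eval x) (P.eval y) := ⟨le_of_lt hpx, le_of_lt hpy⟩
          obtain ⟨z, hz, hz0⟩ := intermediate_value_Icc hxy hcont this
          exact hnoroot z (hIcc hz) hz0
      intro x hx y hy
      rcases le_total x y with h | h
      · exact main x hx y hy h
      · rw [mul_comm]; exact main y hy x hx h
    -- the decision at step n is constant on (1-δ, 1)
    set q₀ : ℝ := 1 - δ / 2 with hq₀def
    have hq₀ : q₀ ∈ Set.Ioo (1 - δ) (1 : ℝ) := by constructor <;> simp [hq₀def] <;> linarith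
    have hbn : (b n : ℝ) ≠ 0 := by
      have := hb q₀ (hsub hq₀) n (le_refl n)
      rcases greedyAux_fst_sq q₀ n with h | h <;>
        · rw [← this, h]; norm_num
    set c : Prop := 0 ≤ (b n : ℝ) * P.eval q₀ with hc
    have hcond : ∀ q ∈ Set.Ioo (1 - δ) (1 : ℝ),
        ((0 : ℝ) ≤ (b n : ℝ) * P.eval q ↔ c) := by
      intro q hq
      have h1 : (b n : ℝ) * P.eval q ≠ 0 := mul_ne_zero hbn (hnoroot q hq)
      have h2 : (b n : ℝ) * P.eval q₀ ≠ 0 := mul_ne_zero hbn (hnoroot q₀ hq₀)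
      have h3 : 0 < ((b n : ℝ) * P.eval q) * ((b n : ℝ) * P.eval q₀) := by
        have := hsign q hq q₀ hq₀
        have hbsq : 0 < (b n : ℝ) * (b n : ℝ) := mul_self_pos.mpr hbn
        calc (0:ℝ) < ((b n : ℝ) * (b n : ℝ)) * (P.eval q * P.eval q₀) :=
              mul_pos hbsq this
          _ = ((b n : ℝ) * P.eval q) * ((b n : ℝ) * P.eval q₀) := by ring
      rcases mul_pos_iff.mp h3 with ⟨ha, hb'⟩ | ⟨ha, hb'⟩
      · exact iff_of_true (le_of_lt ha) (le_of_lt hb')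
      · exact iff_of_false (not_le.mpr ha) (not_le.mpr hb')
    have hmain : ∀ q ∈ Set.Ioo (1 - δ) (1 : ℝ), ∀ i ≤ n + 1,
        (greedyAux q i).1 = if i = n + 1 then (if c then -b n else b n) else b i := by
      intro q hq i hi
      by_cases h : i = n + 1
      · subst h
        rw [if_pos rfl]
        show (if 0 ≤ ((greedyAux q n).1 : ℝ) * (greedyAux q n).2 then -(greedyAux q n).1
            else (greedyAux q n).1) = _
        rw [hb q (hsub hq) n (le_refl n), ← hPeval q (hsub hq)]
        by_cases hcq : (0 : ℝ) ≤ (b n : ℝ) * P.eval q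
        · rw [if_pos hcq, if_pos ((hcond q hq).mp hcq)]
        · rw [if_neg hcq, if_neg (fun h2 => hcq ((hcond q hq).mpr h2))]
      · rw [if_neg h]
        exact hb q (hsub hq) i (by omega)
    exact ⟨δ, hδpos, _, hmain⟩

/-- For each `n ∈ ℕ` there exists `ε > 0` such that the initial segment
`(a_0(q), …, a_n(q))` of the greedy firing sequence is the same for all `q ∈ (1-ε, 1)`. -/
theorem greedySeq_initialSegment_eventually_constant (n : ℕ) :
    ∃ ε > (0 : ℝ), ∀ q ∈ Set.Ioo (1 - ε) (1 : ℝ), ∀ q' ∈ Set.Ioo (1 - ε) (1 : ℝ),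
      ∀ i ≤ n, greedySeq q i = greedySeq q' i := by
  obtain ⟨ε, hε, b, hb⟩ := key n
  exact ⟨ε, hε, fun q hq q' hq' i hi => by
    unfold greedySeq; rw [hb q hq i hi, hb q' hq' i hi]⟩
end

section
/- Fix q ∈ (0,1) and suppose the greedy firing sequence a(q) takes the value 1 for infinitely many indices and the value −1 for infinitely many indices. Then Bob's limiting winning probability equals Alice's: ∑_{i : a_i(q) = 1} q^i = ∑_{i : a_i(q) = −1} q^i = 1/(2(1−q)); equivalently, each player's probability of eventually winning is (1−q) · 1/(2(1−q)) = 1/2. -/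
lemma greedySeq_succ (q : ℝ) (n : ℕ) :
    greedySeq q (n+1) = if 0 ≤ ((greedySeq q n : ℝ)) * (greedyAux q n).2
      then -(greedySeq q n) else greedySeq q n := rfl

lemma snd_succ (q : ℝ) (n : ℕ) :
    (greedyAux q (n+1)).2 = (greedyAux q n).2 + ((greedySeq q (n+1) : ℝ)) * q ^ (n+1) := rfl

lemma greedySeq_pm (q : ℝ) (n : ℕ) : greedySeq q n = 1 ∨ greedySeq q n = -1 := by
  induction n with
  | zero => right; rfl
  | succ n ih => rw [greedySeq_succ]; rcases ih with h | h <;> rw [h] <;> split <;> simp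

lemma abs_cast_greedySeq (q : ℝ) (n : ℕ) : |((greedySeq q n : ℝ))| = 1 := by
  rcases greedySeq_pm q n with h | h <;> rw [h] <;> norm_num

lemma sq_cast_greedySeq (q : ℝ) (n : ℕ) : ((greedySeq q n : ℝ)) * (greedySeq q n) = 1 := by
  rcases greedySeq_pm q n with h | h <;> rw [h] <;> norm_num

-- t_{n+1} = q^{n+1} - |t n|
lemma t_succ (q : ℝ) (n : ℕ) :
    ((greedySeq q (n+1) : ℝ)) * (greedyAux q (n+1)).2
      = q ^ (n+1) - |((greedySeq q n : ℝ)) * (greedyAux q n).2| := by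
  rw [snd_succ, mul_add, ← mul_assoc, sq_cast_greedySeq, one_mul, greedySeq_succ]
  split_ifs with h
  · rw [abs_of_nonneg h]; push_cast; ring
  · rw [abs_of_nonpos (le_of_not_ge h)]; ring

lemma t_le (q : ℝ) (n : ℕ) :
    ((greedySeq q n : ℝ)) * (greedyAux q n).2 ≤ q ^ n := by
  cases n with
  | zero => show ((-1 : ℤ) : ℝ) * (-1) ≤ 1; norm_num
  | succ n => rw [t_succ]; have := abs_nonneg (((greedySeq q n : ℝ)) * (greedyAux q n).2); linarith

lemma abs_t (q : ℝ) (n : ℕ) :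
    |((greedySeq q n : ℝ)) * (greedyAux q n).2| = |(greedyAux q n).2| := by
  rw [abs_mul, abs_cast_greedySeq, one_mul]

lemma absS_succ (q : ℝ) (n : ℕ) :
    |(greedyAux q (n+1)).2| = abs (q ^ (n+1) - abs ((greedyAux q n).2)) := by
  rw [← abs_t, t_succ, abs_t]

lemma absS_mono (q : ℝ) (hq : q ∈ Set.Ioo (0:ℝ) 1) {n : ℕ} (h : |(greedyAux q n).2| ≤ q ^ n) :
    ∀ m, n ≤ m → |(greedyAux q m).2| ≤ q ^ n := by
  intro m hm
  induction m, hm using Nat.le_induction with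
  | base => exact h
  | succ m hm ih =>
    rw [absS_succ]
    have h1 : (0:ℝ) ≤ q ^ (m+1) := pow_nonneg hq.1.le _
    have h2 : q ^ (m+1) ≤ q ^ n := pow_le_pow_of_le_one hq.1.le hq.2.le (by omega)
    have h3 := abs_nonneg (greedyAux q m).2
    rw [abs_le]; constructor <;> linarith

open Filter Finset

lemma snd_eq_sum (q : ℝ) (n : ℕ) :
    (greedyAux q n).2 = ∑ i ∈ Finset.range (n+1), ((greedySeq q i : ℝ)) * q ^ i := by
  induction n with
  | zero => show (-1 : ℝ) = _ ; simp [greedySeq, greedyAux]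
  | succ n ih => rw [snd_succ, ih, Finset.sum_range_succ _ (n+1)]

lemma flips_often (q : ℝ) (hB : {i : ℕ | greedySeq q i = 1}.Infinite)
    (hA : {i : ℕ | greedySeq q i = -1}.Infinite) (N : ℕ) :
    ∃ n, N ≤ n ∧ 0 ≤ ((greedySeq q n : ℝ)) * (greedyAux q n).2 := by
  by_contra hcon
  push_neg at hcon
  have hconst : ∀ n, N ≤ n → greedySeq q n = greedySeq q N := by
    intro n hn
    induction n, hn using Nat.le_induction with
    | base => rfl
    | succ n hn ih =>
      rw [greedySeq_succ, if_neg (not_le.2 (hcon n hn)), ih]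
  rcases greedySeq_pm q N with h | h
  · obtain ⟨i, hi, hiN⟩ := hA.exists_gt N
    have := hconst i hiN.le
    rw [hi, h] at this; norm_num at this
  · obtain ⟨i, hi, hiN⟩ := hB.exists_gt N
    have := hconst i hiN.le
    rw [hi, h] at this; norm_num at this

lemma snd_tendsto (q : ℝ) (hq : q ∈ Set.Ioo (0:ℝ) 1)
    (hB : {i : ℕ | greedySeq q i = 1}.Infinite)
    (hA : {i : ℕ | greedySeq q i = -1}.Infinite) :
    Tendsto (fun n => (greedyAux q n).2) atTop (nhds 0) := by
  rw [Metric.tendsto_atTop]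
  intro ε hε
  have hq0 : (0:ℝ) ≤ q := hq.1.le
  obtain ⟨M, hM⟩ := (Metric.tendsto_atTop.1
    (tendsto_pow_atTop_nhds_zero_of_lt_one hq0 hq.2)) ε hε
  obtain ⟨n, hn, ht⟩ := flips_often q hB hA M
  have hqn : q ^ n < ε := by
    have := hM n hn
    rwa [Real.dist_eq, sub_zero, abs_of_nonneg (pow_nonneg hq0 n)] at this
  have hSn : |(greedyAux q n).2| ≤ q ^ n := by
    rw [← abs_t]
    rw [abs_of_nonneg ht]
    exact t_le q n
  refine ⟨n, fun m hm => ?_⟩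
  rw [Real.dist_eq, sub_zero]
  exact lt_of_le_of_lt (absS_mono q hq hSn m hm) hqn

lemma summable_signed (q : ℝ) (hq : q ∈ Set.Ioo (0:ℝ) 1) :
    Summable (fun i => ((greedySeq q i : ℝ)) * q ^ i) := by
  refine Summable.of_norm_bounded (summable_geometric_of_lt_one hq.1.le hq.2) (fun i => ?_)
  rw [norm_mul, Real.norm_eq_abs, Real.norm_eq_abs, abs_cast_greedySeq, one_mul,
    abs_of_nonneg (pow_nonneg hq.1.le i)]

lemma tsum_signed_zero (q : ℝ) (hq : q ∈ Set.Ioo (0:ℝ) 1)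
    (hB : {i : ℕ | greedySeq q i = 1}.Infinite)
    (hA : {i : ℕ | greedySeq q i = -1}.Infinite) :
    ∑' i, ((greedySeq q i : ℝ)) * q ^ i = 0 := by
  have hsum := summable_signed q hq
  have h1 : Tendsto (fun n => ∑ i ∈ Finset.range n, ((greedySeq q i : ℝ)) * q ^ i)
      atTop (nhds 0) := by
    rw [← tendsto_add_atTop_iff_nat 1]
    have := snd_tendsto q hq hB hA
    simpa only [snd_eq_sum] using this
  have h2 := hsum.hasSum.tendsto_sum_nat
  exact tendsto_nhds_unique h2 h1


/-- Fix `q ∈ (0,1)` and suppose the greedy firing sequence takes each of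
the values `1` and `-1` infinitely often. Then
`∑_{i : a_i(q) = 1} q^i = ∑_{i : a_i(q) = -1} q^i = 1/(2(1-q))`; equivalently each
player's probability of eventually winning is `(1-q) · 1/(2(1-q)) = 1/2`. -/
theorem greedySeq_limiting_probabilities_equal (q : ℝ) (hq : q ∈ Set.Ioo (0 : ℝ) 1)
    (hB : {i : ℕ | greedySeq q i = 1}.Infinite)
    (hA : {i : ℕ | greedySeq q i = -1}.Infinite) :
    (∑' i : {i : ℕ // greedySeq q i = 1}, q ^ (i : ℕ)) = 1 / (2 * (1 - q)) ∧
    (∑' i : {i : ℕ // greedySeq q i = -1}, q ^ (i : ℕ)) = 1 / (2 * (1 - q)) ∧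
    (1 - q) * (∑' i : {i : ℕ // greedySeq q i = 1}, q ^ (i : ℕ)) = 1 / 2 ∧
    (1 - q) * (∑' i : {i : ℕ // greedySeq q i = -1}, q ^ (i : ℕ)) = 1 / 2 := by
  have hq0 : (0:ℝ) ≤ q := hq.1.le
  have hg : Summable (fun i : ℕ => q ^ i) := summable_geometric_of_lt_one hq0 hq.2
  have h1 : Summable (Set.indicator {i : ℕ | greedySeq q i = 1} fun i : ℕ => q ^ i) :=
    hg.indicator _
  have h2 : Summable (Set.indicator {i : ℕ | greedySeq q i = -1} fun i : ℕ => q ^ i) :=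
    hg.indicator _
  have key1 : ∀ i, Set.indicator {i : ℕ | greedySeq q i = 1} (fun i : ℕ => q ^ i) i
      + Set.indicator {i : ℕ | greedySeq q i = -1} (fun i : ℕ => q ^ i) i = q ^ i := by
    intro i
    rcases greedySeq_pm q i with h | h
    · rw [Set.indicator_of_mem (show i ∈ {i : ℕ | greedySeq q i = 1} from h),
        Set.indicator_of_notMem (by simp [h]), add_zero]
    · rw [Set.indicator_of_notMem (by simp [h]),
        Set.indicator_of_mem (show i ∈ {i : ℕ | greedySeq q i = -1} from h), zero_add]
  have key2 : ∀ i, Set.indicator {i : ℕ | greedySeq q i = 1} (fun i : ℕ => q ^ i) i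
      - Set.indicator {i : ℕ | greedySeq q i = -1} (fun i : ℕ => q ^ i) i
      = ((greedySeq q i : ℝ)) * q ^ i := by
    intro i
    rcases greedySeq_pm q i with h | h
    · rw [Set.indicator_of_mem (show i ∈ {i : ℕ | greedySeq q i = 1} from h),
        Set.indicator_of_notMem (by simp [h]), sub_zero, h]
      norm_num
    · rw [Set.indicator_of_notMem (by simp [h]),
        Set.indicator_of_mem (show i ∈ {i : ℕ | greedySeq q i = -1} from h), zero_sub, h]
      push_cast; ring
  have e1 : (∑' i : {i : ℕ // greedySeq q i = 1}, q ^ (i : ℕ))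
      = ∑' i, Set.indicator {i : ℕ | greedySeq q i = 1} (fun i : ℕ => q ^ i) i :=
    tsum_subtype {i : ℕ | greedySeq q i = 1} (fun i : ℕ => q ^ i)
  have e2 : (∑' i : {i : ℕ // greedySeq q i = -1}, q ^ (i : ℕ))
      = ∑' i, Set.indicator {i : ℕ | greedySeq q i = -1} (fun i : ℕ => q ^ i) i :=
    tsum_subtype {i : ℕ | greedySeq q i = -1} (fun i : ℕ => q ^ i)
  have hadd : (∑' i : {i : ℕ // greedySeq q i = 1}, q ^ (i : ℕ))
      + (∑' i : {i : ℕ // greedySeq q i = -1}, q ^ (i : ℕ)) = (1 - q)⁻¹ := by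
    rw [e1, e2, ← Summable.tsum_add h1 h2]
    rw [show (fun i => Set.indicator {i : ℕ | greedySeq q i = 1} (fun i : ℕ => q ^ i) i
        + Set.indicator {i : ℕ | greedySeq q i = -1} (fun i : ℕ => q ^ i) i)
      = fun i : ℕ => q ^ i from funext key1]
    exact tsum_geometric_of_lt_one hq0 hq.2
  have hsub : (∑' i : {i : ℕ // greedySeq q i = 1}, q ^ (i : ℕ))
      - (∑' i : {i : ℕ // greedySeq q i = -1}, q ^ (i : ℕ)) = 0 := by
    rw [e1, e2, ← Summable.tsum_sub h1 h2]
    rw [show (fun i => Set.indicator {i : ℕ | greedySeq q i = 1} (fun i : ℕ => q ^ i) i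
        - Set.indicator {i : ℕ | greedySeq q i = -1} (fun i : ℕ => q ^ i) i)
      = fun i : ℕ => ((greedySeq q i : ℝ)) * q ^ i from funext key2]
    exact tsum_signed_zero q hq hB hA
  have hqne : (1 : ℝ) - q ≠ 0 := by
    have := hq.2; intro hcon; linarith [sub_eq_zero.1 hcon]
  have hv1 : (∑' i : {i : ℕ // greedySeq q i = 1}, q ^ (i : ℕ)) = 1 / (2 * (1 - q)) := by
    have h := hadd
    have h' := hsub
    have : (∑' i : {i : ℕ // greedySeq q i = 1}, q ^ (i : ℕ)) = (1 - q)⁻¹ / 2 := by linarith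
    rw [this]; field_simp
  have hv2 : (∑' i : {i : ℕ // greedySeq q i = -1}, q ^ (i : ℕ)) = 1 / (2 * (1 - q)) := by
    have : (∑' i : {i : ℕ // greedySeq q i = -1}, q ^ (i : ℕ)) = (1 - q)⁻¹ / 2 := by linarith
    rw [this]; field_simp
  refine ⟨hv1, hv2, ?_, ?_⟩
  · rw [hv1]; field_simp
  · rw [hv2]; field_simp
end

section
/- There exist constants C₁, C₂ > 0 and a sequence b : ℕ → {−1, +1} such that for all real x ∈ [0, 1), |∑_{n=0}^{∞} b_n xⁿ| < C₁ e^{−C₂/(1−x)}. That is, the constant zero function can be approximated within exp(−c/(1−x)) on [0,1) by a power series with coefficients ±1. -/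
open Real

noncomputable def bb : ℕ → ℝ := fun n => (-1)^(Nat.sqrt n)
noncomputable def thL (a : ℝ) : ℤ → ℝ := fun n => (-1:ℝ)^n * rexp (-π * a * (n:ℝ)^2)
lemma sqrt_sq_sub_one (j : ℕ) : Nat.sqrt ((j+1)^2 - 1) = j := by
  have h1 : j*j ≤ (j+1)^2 - 1 := by
    have : j*j + 1 ≤ (j+1)^2 := by nlinarith
    omega
  have h2 : (j+1)^2 - 1 < (j+1)*(j+1) := by
    have h3 : (j+1)^2 = (j+1)*(j+1) := by ring
    have : 1 ≤ (j+1)*(j+1) := Nat.one_le_iff_ne_zero.mpr (by positivity)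
    omega
  have a1 := Nat.le_sqrt.mpr h1
  have a2 := Nat.sqrt_lt.mpr h2
  omega

lemma sqrt_succ_of_ne (n : ℕ) (h : Nat.sqrt (n+1) ≠ Nat.sqrt n) : n + 1 = (Nat.sqrt n + 1)^2 := by
  have h1 : n < (Nat.sqrt n + 1) * (Nat.sqrt n + 1) := Nat.lt_succ_sqrt n
  have h2 : Nat.sqrt n ≤ Nat.sqrt (n+1) := Nat.sqrt_le_sqrt (by omega)
  by_contra hne
  have h3 : n + 1 < (Nat.sqrt n + 1) * (Nat.sqrt n + 1) := by
    have : (Nat.sqrt n + 1)^2 = (Nat.sqrt n + 1) * (Nat.sqrt n + 1) := by ring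
    omega
  have h4 : Nat.sqrt (n+1) < Nat.sqrt n + 1 := Nat.sqrt_lt.mpr h3
  omega

lemma bb_abs (n : ℕ) : |bb n| = 1 := by
  unfold bb
  rcases Nat.even_or_odd (Nat.sqrt n) with h | h
  · rw [h.neg_one_pow]; norm_num
  · rw [h.neg_one_pow]; norm_num

lemma block_identity {x : ℝ} (hx0 : 0 < x) (hx1 : x < 1) :
    (1 - x) * ∑' n : ℕ, bb n * x^n
      = 1 + ∑' j : ℕ, 2 * (-1)^(j+1) * x^((j+1)^2) := by
  have hgeo : Summable (fun n : ℕ => x^n) := summable_geometric_of_lt_one hx0.le hx1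
  have hs : Summable (fun n : ℕ => bb n * x^n) := by
    refine Summable.of_norm_bounded hgeo (fun n => ?_)
    rw [norm_mul, Real.norm_eq_abs, Real.norm_eq_abs, bb_abs, one_mul,
      abs_of_nonneg (pow_nonneg hx0.le n)]
  have hs1 : Summable (fun n : ℕ => bb (n+1) * x^(n+1)) := by
    have := (summable_nat_add_iff 1).mpr hs
    simpa using this
  have hs2 : Summable (fun n : ℕ => bb n * x^(n+1)) := by
    refine Summable.of_norm_bounded ((summable_nat_add_iff 1).mpr hgeo) (fun n => ?_)
    rw [norm_mul, Real.norm_eq_abs, Real.norm_eq_abs, bb_abs, one_mul,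
      abs_of_nonneg (pow_nonneg hx0.le _)]
  have e1 : x * ∑' n : ℕ, bb n * x^n = ∑' n : ℕ, bb n * x^(n+1) := by
    rw [← tsum_mul_left]
    congr 1; funext n; ring
  have e2 : ∑' n : ℕ, bb n * x^n = bb 0 * x^0 + ∑' n : ℕ, bb (n+1) * x^(n+1) :=
    Summable.tsum_eq_zero_add hs
  have e3 : (1 - x) * ∑' n : ℕ, bb n * x^n
      = 1 + ∑' n : ℕ, (bb (n+1) - bb n) * x^(n+1) := by
    rw [sub_mul, one_mul, e1]
    rw [e2]
    rw [show (∑' n : ℕ, (bb (n+1) - bb n) * x^(n+1))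
        = ∑' n : ℕ, (bb (n+1) * x^(n+1) - bb n * x^(n+1)) by congr 1; funext n; ring]
    rw [Summable.tsum_sub hs1 hs2]
    unfold bb
    simp
    ring
  rw [e3]
  congr 1
  -- reindex
  refine tsum_eq_tsum_of_ne_zero_bij
    (fun j => ((j : ℕ) + 1)^2 - 1) ?_ ?_ ?_
  · intro i j hij
    simp only at hij
    have e1 : 1 ≤ ((i:ℕ)+1)^2 := Nat.one_le_iff_ne_zero.mpr (by positivity)
    have e2 : 1 ≤ ((j:ℕ)+1)^2 := Nat.one_le_iff_ne_zero.mpr (by positivity)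
    have h1 : ((i:ℕ)+1)^2 = ((j:ℕ)+1)^2 := by omega
    have h2 : (i:ℕ)+1 = (j:ℕ)+1 := Nat.pow_left_injective (by norm_num) h1
    exact Subtype.ext (by omega)
  · intro n hn
    simp only [Function.mem_support] at hn
    have hne : bb (n+1) ≠ bb n := by
      intro h; apply hn; rw [h]; ring
    have hsq : Nat.sqrt (n+1) ≠ Nat.sqrt n := by
      intro h; apply hne; unfold bb; rw [h]
    have := sqrt_succ_of_ne n hsq
    refine ⟨⟨Nat.sqrt n, ?_⟩, ?_⟩
    · simp only [Function.mem_support]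
      have : x ^ ((Nat.sqrt n + 1)^2) ≠ 0 := pow_ne_zero _ hx0.ne'
      positivity
    · simp only
      omega
  · intro j
    obtain ⟨j, hj⟩ := j
    simp only
    have h1 : ((j:ℕ)+1)^2 - 1 + 1 = (j+1)^2 := by
      have : 1 ≤ (j+1)^2 := Nat.one_le_iff_ne_zero.mpr (by positivity)
      omega
    rw [h1]
    unfold bb
    rw [show Nat.sqrt ((j+1)^2) = j + 1 by rw [sq]; exact Nat.sqrt_eq (j+1)]
    rw [sqrt_sq_sub_one j]
    ring
lemma poisson {a : ℝ} (ha : 0 < a) :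
    ∑' n : ℤ, thL a n = (1 / Real.sqrt a) * ∑' n : ℤ, rexp (-π / a * ((n:ℝ) - 1/2)^2) := by
  have key := Complex.tsum_exp_neg_quadratic (a := (a:ℂ)) (by simpa using ha) (Complex.I/2)
  have hL : ∀ n : ℤ, Complex.exp (-(π:ℂ)*(a:ℂ)*(n:ℂ)^2 + 2*(π:ℂ)*(Complex.I/2)*(n:ℂ))
      = ((thL a n : ℝ) : ℂ) := by
    intro n
    rw [Complex.exp_add]
    have h1 : (2*(π:ℂ)*(Complex.I/2)*(n:ℂ)) = (n:ℂ) * ((π:ℂ)*Complex.I) := by ring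
    rw [h1, Complex.exp_int_mul, Complex.exp_pi_mul_I]
    have h2 : (-(π:ℂ)*(a:ℂ)*(n:ℂ)^2) = ((-π*a*(n:ℝ)^2 : ℝ) : ℂ) := by push_cast; ring
    rw [h2, ← Complex.ofReal_exp]
    unfold thL
    push_cast
    ring
  have hR : ∀ n : ℤ, Complex.exp (-(π:ℂ)/(a:ℂ) * ((n:ℂ) + Complex.I*(Complex.I/2))^2)
      = ((rexp (-π / a * ((n:ℝ) - 1/2)^2) : ℝ) : ℂ) := by
    intro n
    have h1 : ((n:ℂ) + Complex.I*(Complex.I/2)) = ((((n:ℝ) - 1/2 : ℝ)) : ℂ) := by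
      have : Complex.I * (Complex.I/2) = -(1/2) := by
        rw [show Complex.I * (Complex.I/2) = Complex.I*Complex.I/2 by ring, Complex.I_mul_I]
        ring
      rw [this]; push_cast; ring
    rw [h1]
    have h2 : (-(π:ℂ)/(a:ℂ) * ((((n:ℝ) - 1/2 : ℝ)) : ℂ)^2)
        = ((-π/a * ((n:ℝ) - 1/2)^2 : ℝ) : ℂ) := by push_cast; ring
    rw [h2, ← Complex.ofReal_exp]
  have hpre : (1 / (a:ℂ)^((1:ℂ)/2)) = (((1 / Real.sqrt a : ℝ)) : ℂ) := by
    rw [Real.sqrt_eq_rpow, Complex.ofReal_div, Complex.ofReal_one,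
      Complex.ofReal_cpow ha.le]
    norm_num
  have e1 : ((∑' n : ℤ, thL a n : ℝ) : ℂ)
      = ∑' n : ℤ, Complex.exp (-(π:ℂ)*(a:ℂ)*(n:ℂ)^2 + 2*(π:ℂ)*(Complex.I/2)*(n:ℂ)) := by
    rw [Complex.ofReal_tsum]
    exact tsum_congr fun n => (hL n).symm
  have e2 : ((1 / Real.sqrt a * ∑' n : ℤ, rexp (-π / a * ((n:ℝ) - 1/2)^2) : ℝ) : ℂ)
      = 1/(a:ℂ)^((1:ℂ)/2) * ∑' n : ℤ, Complex.exp (-(π:ℂ)/(a:ℂ) * ((n:ℂ) + Complex.I*(Complex.I/2))^2) := by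
    rw [Complex.ofReal_mul, Complex.ofReal_tsum, hpre]
    congr 1
    exact tsum_congr fun n => (hR n).symm
  have := e1.trans (key.trans e2.symm)
  exact_mod_cast this
lemma neg_one_zpow_neg (k : ℕ) : ((-1:ℝ))^(-(k:ℤ)) = (-1:ℝ)^k := by
  rw [zpow_neg, zpow_natCast]
  rcases Nat.even_or_odd k with h | h
  · rw [h.neg_one_pow]; norm_num
  · rw [h.neg_one_pow]; norm_num

lemma thL_nat {x : ℝ} (hx0 : 0 < x) (n : ℕ) :
    thL (-Real.log x / π) (n : ℤ) = (-1:ℝ)^n * x^(n^2) := by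
  unfold thL
  have hπ : (π:ℝ) ≠ 0 := Real.pi_ne_zero
  have h1 : -π * (-Real.log x / π) * ((n:ℤ):ℝ)^2 = ((n^2 : ℕ):ℝ) * Real.log x := by
    field_simp; push_cast; ring
  rw [h1, Real.exp_nat_mul, Real.exp_log hx0, zpow_natCast]

lemma thL_neg {x : ℝ} (hx0 : 0 < x) (n : ℕ) :
    thL (-Real.log x / π) (-((n:ℤ) + 1)) = (-1:ℝ)^(n+1) * x^((n+1)^2) := by
  unfold thL
  have hπ : (π:ℝ) ≠ 0 := Real.pi_ne_zero
  have h1 : -π * (-Real.log x / π) * ((-((n:ℤ)+1) : ℤ):ℝ)^2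
      = (((n+1)^2 : ℕ):ℝ) * Real.log x := by
    field_simp; push_cast; ring
  rw [h1, Real.exp_nat_mul, Real.exp_log hx0]
  congr 1
  rw [show (-((n:ℤ)+1)) = -(((n+1 : ℕ)):ℤ) by push_cast; ring]
  exact neg_one_zpow_neg (n+1)

lemma summable_sign_sq {x : ℝ} (hx0 : 0 < x) (hx1 : x < 1) :
    Summable (fun n : ℕ => (-1:ℝ)^n * x^(n^2)) := by
  refine Summable.of_norm_bounded (summable_geometric_of_lt_one hx0.le hx1) (fun n => ?_)
  rw [norm_mul, norm_pow, norm_neg, norm_one, one_pow, one_mul, Real.norm_eq_abs,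
    abs_of_nonneg (pow_nonneg hx0.le _)]
  exact pow_le_pow_of_le_one hx0.le hx1.le (Nat.le_self_pow two_ne_zero n)

lemma summable_sign_sq' {x : ℝ} (hx0 : 0 < x) (hx1 : x < 1) :
    Summable (fun n : ℕ => (-1:ℝ)^(n+1) * x^((n+1)^2)) := by
  have := (summable_nat_add_iff 1).mpr (summable_sign_sq hx0 hx1)
  simpa using this

lemma theta_split {x : ℝ} (hx0 : 0 < x) (hx1 : x < 1) :
    ∑' n : ℤ, thL (-Real.log x / π) n
      = 1 + ∑' j : ℕ, 2 * (-1:ℝ)^(j+1) * x^((j+1)^2) := by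
  have h1 : Summable (fun n : ℕ => thL (-Real.log x / π) (n : ℤ)) := by
    rw [funext (thL_nat hx0)]; exact summable_sign_sq hx0 hx1
  have h2 : Summable (fun n : ℕ => thL (-Real.log x / π) (-((n:ℤ) + 1))) := by
    rw [funext (thL_neg hx0)]; exact summable_sign_sq' hx0 hx1
  rw [tsum_of_nat_of_neg_add_one h1 h2]
  rw [funext (thL_nat hx0), funext (thL_neg hx0)]
  rw [Summable.tsum_eq_zero_add (summable_sign_sq hx0 hx1)]
  have e : ∑' j : ℕ, 2 * (-1:ℝ)^(j+1) * x^((j+1)^2)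
      = (∑' j : ℕ, (-1:ℝ)^(j+1) * x^((j+1)^2)) + ∑' j : ℕ, (-1:ℝ)^(j+1) * x^((j+1)^2) := by
    rw [← Summable.tsum_add (summable_sign_sq' hx0 hx1) (summable_sign_sq' hx0 hx1)]
    congr 1; funext j; ring
  rw [e]
  push_cast
  ring
lemma S_bound {a : ℝ} (ha : 0 < a) (ha1 : π / a ≥ 1) :
    ∑' n : ℤ, rexp (-π / a * ((n:ℝ) - 1/2)^2) ≤ 5 * rexp (-π / (4*a)) := by
  set c := π / a with hc
  have hc0 : 0 < c := lt_of_lt_of_le one_pos ha1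
  set q := rexp (-c) with hq
  have hq0 : 0 < q := Real.exp_pos _
  have hq2 : q ≤ 1/2 := by
    rw [hq]
    have h1 : rexp (-c) ≤ rexp (-1) := Real.exp_le_exp.mpr (by linarith)
    have h2 : rexp (-1) ≤ 1/2 := by
      rw [Real.exp_neg]
      rw [inv_le_comm₀ (Real.exp_pos 1) (by norm_num)]  -- maybe wrong name
      have := Real.add_one_le_exp 1
      linarith
    linarith
  have hq1 : q < 1 := by linarith
  have hE : rexp (-π/(4*a)) = rexp (-c * (1/4)) := by
    rw [hc]; congr 1; ring
  -- positive side terms shifted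
  have hterm_pos : ∀ n : ℕ, rexp (-c * (((n+1:ℕ):ℝ) - 1/2)^2) ≤ rexp (-c * (1/4)) * q^n := by
    intro n
    rw [hq, ← Real.exp_nat_mul, ← Real.exp_add]
    apply Real.exp_le_exp.mpr
    have h1 : (((n+1:ℕ):ℝ) - 1/2)^2 = (n:ℝ)^2 + (n:ℝ) + 1/4 := by push_cast; ring
    rw [h1]
    have h2 : (1/4 : ℝ) + (n:ℝ) ≤ (n:ℝ)^2 + (n:ℝ) + 1/4 := by nlinarith [sq_nonneg (n:ℝ)]
    nlinarith [hc0]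
  have hterm_neg : ∀ n : ℕ, rexp (-c * ((((-((n:ℤ)+1)):ℤ):ℝ) - 1/2)^2) ≤ rexp (-c * (1/4)) * q^n := by
    intro n
    rw [hq, ← Real.exp_nat_mul, ← Real.exp_add]
    apply Real.exp_le_exp.mpr
    have h1 : ((((-((n:ℤ)+1)):ℤ):ℝ) - 1/2)^2 = (n:ℝ)^2 + 3*(n:ℝ) + 9/4 := by push_cast; ring
    rw [h1]
    nlinarith [sq_nonneg (n:ℝ), Nat.cast_nonneg (α := ℝ) n, hc0]
  have hgeo : Summable (fun n : ℕ => rexp (-c * (1/4)) * q^n) :=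
    (summable_geometric_of_lt_one hq0.le hq1).mul_left _
  have hs_pos' : Summable (fun n : ℕ => rexp (-c * (((n+1:ℕ):ℝ) - 1/2)^2)) := by
    refine Summable.of_nonneg_of_le (fun n => (Real.exp_pos _).le) hterm_pos hgeo
  have hs_pos : Summable (fun n : ℕ => rexp (-c * (((n:ℕ):ℝ) - 1/2)^2)) := by
    refine (summable_nat_add_iff 1).mp ?_
    exact_mod_cast hs_pos'
  have hs_neg : Summable (fun n : ℕ => rexp (-c * ((((-((n:ℤ)+1)):ℤ):ℝ) - 1/2)^2)) := by
    refine Summable.of_nonneg_of_le (fun n => (Real.exp_pos _).le) hterm_neg hgeo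
  have hsplit := tsum_of_nat_of_neg_add_one (f := fun n : ℤ => rexp (-c * ((n:ℝ) - 1/2)^2))
    hs_pos hs_neg
  rw [show -π/a = -c by rw [hc]; ring] at *
  rw [hsplit]
  have htsum_geo : ∑' n : ℕ, rexp (-c * (1/4)) * q^n = rexp (-c * (1/4)) * (1-q)⁻¹ := by
    rw [tsum_mul_left, tsum_geometric_of_lt_one hq0.le hq1]
  have hinv : (1-q)⁻¹ ≤ 2 := by
    rw [inv_le_comm₀ (by linarith) (by norm_num)]
    linarith
  have hpos_bound : ∑' n : ℕ, rexp (-c * (((n:ℕ):ℝ) - 1/2)^2)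
      ≤ rexp (-c * (1/4)) + 2 * rexp (-c * (1/4)) := by
    rw [Summable.tsum_eq_zero_add hs_pos]
    have e0 : rexp (-c * (((0:ℕ):ℝ) - 1/2)^2) = rexp (-c * (1/4)) := by norm_num
    rw [e0]
    have : ∑' n : ℕ, rexp (-c * (((n+1:ℕ):ℝ) - 1/2)^2) ≤ rexp (-c * (1/4)) * (1-q)⁻¹ := by
      rw [← htsum_geo]
      exact Summable.tsum_le_tsum hterm_pos hs_pos' hgeo
    have h2 : rexp (-c * (1/4)) * (1-q)⁻¹ ≤ rexp (-c * (1/4)) * 2 :=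
      mul_le_mul_of_nonneg_left hinv (Real.exp_pos _).le
    push_cast at this ⊢
    linarith
  have hneg_bound : ∑' n : ℕ, rexp (-c * ((((-((n:ℤ)+1)):ℤ):ℝ) - 1/2)^2)
      ≤ 2 * rexp (-c * (1/4)) := by
    have : ∑' n : ℕ, rexp (-c * ((((-((n:ℤ)+1)):ℤ):ℝ) - 1/2)^2) ≤ rexp (-c * (1/4)) * (1-q)⁻¹ := by
      rw [← htsum_geo]
      exact Summable.tsum_le_tsum hterm_neg hs_neg hgeo
    have h2 : rexp (-c * (1/4)) * (1-q)⁻¹ ≤ rexp (-c * (1/4)) * 2 :=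
      mul_le_mul_of_nonneg_left hinv (Real.exp_pos _).le
    linarith
  rw [hE]
  push_cast at hpos_bound hneg_bound ⊢
  linarith
lemma endgame {δ : ℝ} (hδ0 : 0 < δ) (hδ2 : δ ≤ 1/2) :
    5 * Real.sqrt π / Real.sqrt δ * rexp (-(π^2) / (8*δ)) < 1000 * δ * rexp (-((1/2:ℝ)/δ)) := by
  set u : ℝ := (π^2/8 - 1/2)/δ with hu
  have hπ3 : π > 3 := Real.pi_gt_three
  have hπ2 : π^2 ≥ 9 := by nlinarith
  have hu58 : 5/(8*δ) ≤ u := by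
    rw [hu, div_le_div_iff₀ (by positivity) hδ0]
    nlinarith
  have hu0 : 0 < u := lt_of_lt_of_le (by positivity) hu58
  have hsplit : rexp (-(π^2) / (8*δ)) = rexp (-((1/2:ℝ)/δ)) * rexp (-u) := by
    rw [← Real.exp_add]
    congr 1
    rw [hu]
    field_simp
    ring
  rw [hsplit]
  have hexp1 : rexp (u/3) ^ 3 = rexp u := by
    rw [← Real.exp_nat_mul]
    push_cast
    ring_nf
  have hcube : (5/(24*δ))^3 ≤ rexp u := by
    rw [← hexp1]
    have h0 : (5:ℝ)/(24*δ) = (5/(8*δ))/3 := by ring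
    have h1 : 5/(24*δ) ≤ u/3 := by rw [h0]; linarith
    have h2 : u/3 ≤ rexp (u/3) := by
      have := Real.add_one_le_exp (u/3)
      linarith
    exact pow_le_pow_left₀ (by positivity) (le_trans h1 h2) 3
  have hδcube : rexp u * δ^3 ≥ (5/24)^3 := by
    have h3 := mul_le_mul_of_nonneg_right hcube (le_of_lt (by positivity : (0:ℝ) < δ^3))
    have h4 : (5/(24*δ))^3 * δ^3 = (5/24)^3 := by
      field_simp
    linarith
  -- bounds on sqrt terms
  have hsπ : Real.sqrt π ≤ 2 := by
    rw [show (2:ℝ) = Real.sqrt 4 by rw [show (4:ℝ) = 2^2 by norm_num, Real.sqrt_sq (by norm_num)]]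
    exact Real.sqrt_le_sqrt (by nlinarith [Real.pi_lt_d2])
  have hsδ : δ ≤ Real.sqrt δ := by
    have h1 : Real.sqrt δ ≤ 1 := Real.sqrt_le_one.mpr (by linarith)
    have h2 : Real.sqrt δ * Real.sqrt δ = δ := Real.mul_self_sqrt hδ0.le
    nlinarith [Real.sqrt_nonneg δ]
  have hsδ0 : 0 < Real.sqrt δ := Real.sqrt_pos.mpr hδ0
  -- LHS ≤ 10/δ
  have hLHS : 5 * Real.sqrt π / Real.sqrt δ ≤ 10 / δ := by
    rw [div_le_div_iff₀ hsδ0 hδ0]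
    nlinarith
  -- RHS ≥ 9/δ²  (1000 * δ * rexp u ≥ 9/δ²)
  have hRHS : 9 / δ^2 ≤ 1000 * δ * rexp u := by
    rw [div_le_iff₀ (by positivity)]
    have : 1000 * δ * rexp u * δ^2 = 1000 * (rexp u * δ^3) := by ring
    rw [this]
    nlinarith
  have hmid : 10 / δ < 9 / δ^2 := by
    rw [div_lt_div_iff₀ hδ0 (by positivity)]
    nlinarith
  have hfinal' : 5 * Real.sqrt π / Real.sqrt δ < 1000 * δ * rexp u :=
    lt_of_le_of_lt hLHS (lt_of_lt_of_le hmid hRHS)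
  have hfinal : 5 * Real.sqrt π / Real.sqrt δ * rexp (-u) < 1000 * δ := by
    have h7 := mul_lt_mul_of_pos_right hfinal' (Real.exp_pos (-u))
    have h8 : 1000 * δ * rexp u * rexp (-u) = 1000 * δ := by
      rw [mul_assoc, ← Real.exp_add]
      simp
    linarith [h7, h8.le]
  calc 5 * Real.sqrt π / Real.sqrt δ * (rexp (-((1/2:ℝ)/δ)) * rexp (-u))
      = (5 * Real.sqrt π / Real.sqrt δ * rexp (-u)) * rexp (-((1/2:ℝ)/δ)) := by ring
    _ < 1000 * δ * rexp (-((1/2:ℝ)/δ)) :=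
        mul_lt_mul_of_pos_right hfinal (Real.exp_pos _)

/-- there exist `C₁, C₂ > 0` and a `±1` coefficient sequence `b` whose
power series approximates the zero function on `[0,1)` within `C₁ exp(-C₂/(1-x))`. -/
theorem zero_function_one_bit_approximation :
    ∃ C₁ > (0 : ℝ), ∃ C₂ > (0 : ℝ), ∃ b : ℕ → ℝ, (∀ n, b n = -1 ∨ b n = 1) ∧
      ∀ x ∈ Set.Ico (0 : ℝ) 1,
        |∑' n : ℕ, b n * x ^ n| < C₁ * Real.exp (-C₂ / (1 - x)) := by
  refine ⟨1000, by norm_num, 1/2, by norm_num, bb, ?_, ?_⟩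
  · intro n
    unfold bb
    rcases Nat.even_or_odd (Nat.sqrt n) with h | h
    · right; rw [h.neg_one_pow]
    · left; rw [h.neg_one_pow]
  · rintro x ⟨hx0, hx1⟩
    have hδ0 : 0 < 1 - x := by linarith
    have hgoalarg : -(1/2 : ℝ) / (1 - x) = -((1/2 : ℝ)/(1-x)) := by rw [neg_div]
    have hgeo : Summable (fun n : ℕ => x^n) := summable_geometric_of_lt_one hx0 hx1
    have hnorm : ∀ n : ℕ, ‖bb n * x^n‖ = x^n := fun n => by
      rw [norm_mul, Real.norm_eq_abs, Real.norm_eq_abs, bb_abs, one_mul,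
        abs_of_nonneg (pow_nonneg hx0 n)]
    have hsn : Summable (fun n : ℕ => ‖bb n * x^n‖) := by rw [funext hnorm]; exact hgeo
    have htriv : |∑' n : ℕ, bb n * x^n| ≤ (1-x)⁻¹ := by
      have h1 := norm_tsum_le_tsum_norm hsn
      rw [Real.norm_eq_abs] at h1
      calc |∑' n : ℕ, bb n * x^n| ≤ ∑' n : ℕ, ‖bb n * x^n‖ := h1
        _ = ∑' n : ℕ, x^n := by rw [funext hnorm]
        _ = (1-x)⁻¹ := tsum_geometric_of_lt_one hx0 hx1
    by_cases hhalf : x ≤ 1/2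
    · -- small x : trivial bound suffices
      have h1 : (1-x)⁻¹ ≤ 2 := by
        rw [inv_le_comm₀ hδ0 (by norm_num)]
        linarith
      have h2 : (-(1/2:ℝ))/(1-x) ≥ -1 := by
        rw [hgoalarg, ge_iff_le, neg_le_neg_iff, div_le_one hδ0]
        linarith
      have h3 : rexp ((-(1/2:ℝ))/(1-x)) ≥ rexp (-1) := Real.exp_le_exp.mpr h2
      have h4 : rexp (-1) > 1/3 := by
        rw [Real.exp_neg, gt_iff_lt, lt_inv_comm₀ (by norm_num) (Real.exp_pos 1)]
        have := Real.exp_one_lt_d9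
        norm_num at this ⊢
        linarith
      calc |∑' n : ℕ, bb n * x^n| ≤ (1-x)⁻¹ := htriv
        _ ≤ 2 := h1
        _ < 1000 * (1/3) := by norm_num
        _ ≤ 1000 * rexp (-(1/2:ℝ)/(1-x)) := by nlinarith [h3, h4]
    · -- main case x > 1/2
      push_neg at hhalf
      have hx0' : 0 < x := by linarith
      have hδ2 : 1 - x ≤ 1/2 := by linarith
      have hπ : 0 < π := Real.pi_pos
      have hlog : 0 < -Real.log x := by
        have := Real.log_neg hx0' hx1
        linarith
      have ha : 0 < -Real.log x / π := div_pos hlog hπ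
      have hlow : (1-x)/π ≤ -Real.log x / π := by
        have h1 : Real.log x ≤ x - 1 := Real.log_le_sub_one_of_pos hx0'
        gcongr
        linarith
      have hup : -Real.log x / π ≤ 2*(1-x)/π := by
        have h1 : Real.log x⁻¹ ≤ x⁻¹ - 1 := Real.log_le_sub_one_of_pos (by positivity)
        rw [Real.log_inv] at h1
        have h2 : x⁻¹ - 1 ≤ 2*(1-x) := by
          rw [sub_le_iff_le_add, inv_le_iff_one_le_mul₀ hx0']
          nlinarith
        gcongr
        linarith
      have hup' : (-Real.log x / π) * π ≤ 2*(1-x) := by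
        rw [div_mul_cancel₀ _ hπ.ne']
        have := (div_le_div_iff_of_pos_right hπ).mp hup
        linarith [hup, mul_le_mul_of_nonneg_right hup hπ.le]
      have hπa1 : π / (-Real.log x / π) ≥ 1 := by
        rw [ge_iff_le, le_div_iff₀ ha]
        nlinarith [hup', hπ, Real.pi_gt_three]
      have hkey : (1-x) * ∑' n : ℕ, bb n * x^n
          = (1 / Real.sqrt (-Real.log x / π))
            * ∑' n : ℤ, rexp (-π / (-Real.log x / π) * ((n:ℝ) - 1/2)^2) := by
        rw [block_identity hx0' hx1, ← theta_split hx0' hx1, poisson ha]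
      have hS0 : 0 ≤ ∑' n : ℤ, rexp (-π / (-Real.log x / π) * ((n:ℝ) - 1/2)^2) :=
        tsum_nonneg (fun n => (Real.exp_pos _).le)
      have hSb := S_bound ha hπa1
      -- step 1 : (1-x)*|F| ≤ (1/√a) * (5 e^{-π/4a})
      have h6 : (1-x) * |∑' n : ℕ, bb n * x^n|
          ≤ (1 / Real.sqrt (-Real.log x / π)) * (5 * rexp (-π/(4*(-Real.log x / π)))) := by
        have h7 : (1-x) * |∑' n : ℕ, bb n * x^n| = |(1-x) * ∑' n : ℕ, bb n * x^n| := by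
          rw [abs_mul, abs_of_pos hδ0]
        rw [h7, hkey, abs_mul]
        have h8 : |1 / Real.sqrt (-Real.log x / π)| = 1 / Real.sqrt (-Real.log x / π) :=
          abs_of_pos (by positivity)
        have h9 : |∑' n : ℤ, rexp (-π / (-Real.log x / π) * ((n:ℝ) - 1/2)^2)|
            = ∑' n : ℤ, rexp (-π / (-Real.log x / π) * ((n:ℝ) - 1/2)^2) := abs_of_nonneg hS0
        rw [h8, h9]
        exact mul_le_mul_of_nonneg_left hSb (by positivity)
      -- step 2 : (1/√a) ≤ √π/√(1-x)
      have hsa : 1 / Real.sqrt (-Real.log x / π) ≤ Real.sqrt π / Real.sqrt (1-x) := by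
        have h8 : Real.sqrt ((1-x)/π) ≤ Real.sqrt (-Real.log x / π) := Real.sqrt_le_sqrt hlow
        have h9 : Real.sqrt ((1-x)/π) = Real.sqrt (1-x) / Real.sqrt π :=
          Real.sqrt_div hδ0.le π
        have h10 : 0 < Real.sqrt ((1-x)/π) := Real.sqrt_pos.mpr (by positivity)
        have h11 := one_div_le_one_div_of_le h10 h8
        rw [h9, one_div_div] at h11
        exact h11
      -- step 3 : exp bound
      have hexp : rexp (-π/(4*(-Real.log x / π))) ≤ rexp (-(π^2)/(8*(1-x))) := by
        apply Real.exp_le_exp.mpr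
        have hineq : π^2/(8*(1-x)) ≤ π/(4*(-Real.log x/π)) := by
          rw [div_le_div_iff₀ (by positivity) (by positivity)]
          nlinarith [hup', hπ]
        have e1 : -π/(4*(-Real.log x/π)) = -(π/(4*(-Real.log x/π))) := by ring
        have e2 : -(π^2)/(8*(1-x)) = -(π^2/(8*(1-x))) := by ring
        rw [e1, e2]
        exact neg_le_neg hineq
      -- combine
      have h12 : (1-x) * |∑' n : ℕ, bb n * x^n|
          ≤ 5 * Real.sqrt π / Real.sqrt (1-x) * rexp (-(π^2) / (8*(1-x))) := by
        calc (1-x) * |∑' n : ℕ, bb n * x^n|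
            ≤ (1 / Real.sqrt (-Real.log x / π)) * (5 * rexp (-π/(4*(-Real.log x / π)))) := h6
          _ ≤ (Real.sqrt π / Real.sqrt (1-x)) * (5 * rexp (-(π^2)/(8*(1-x)))) := by
              apply mul_le_mul hsa _ (by positivity) (by positivity)
              exact mul_le_mul_of_nonneg_left hexp (by norm_num)
          _ = 5 * Real.sqrt π / Real.sqrt (1-x) * rexp (-(π^2) / (8*(1-x))) := by ring
      have h13 := endgame hδ0 hδ2
      have h14 : (1-x) * |∑' n : ℕ, bb n * x^n|
          < (1-x) * (1000 * rexp (-((1/2:ℝ)/(1-x)))) := by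
        calc (1-x) * |∑' n : ℕ, bb n * x^n|
            ≤ 5 * Real.sqrt π / Real.sqrt (1-x) * rexp (-(π^2) / (8*(1-x))) := h12
          _ < 1000 * (1-x) * rexp (-((1/2:ℝ)/(1-x))) := h13
          _ = (1-x) * (1000 * rexp (-((1/2:ℝ)/(1-x)))) := by ring
      have h15 := lt_of_mul_lt_mul_left h14 hδ0.le
      rw [hgoalarg]
      exact h15
end
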